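/- Let (G,m,w,B) be a connected weighted finite graph with boundary and let κ > 0. Suppose the Ollivier curvature of (G,m,w) is bounded below by κ, i.e., for all distinct vertices x, y and every function f : V → ℝ satisfying |f(u) − f(v)| ≤ d(u,v) for all u, v ∈ V and (f(y) − f(x))/d(y,x) = 1, one has (Δf(x) − Δf(y))/d(x,y) ≥ κ, where d is the combinatorial graph distance on G. Then the second Steklov eigenvalue satisfies σ₂ ≥ κ. -/

import Mathlib

open Finset Real

namespace GraphSteklov

variable {V : Type*} [Fintype V] [DecidableEq V]

/-- The weighted graph Laplacian: `Δu(x) = (1/m_x) Σ_y (u(y)-u(x)) w_{xy}`. -/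
noncomputable def lap (m : V → ℝ) (w : V → V → ℝ) (u : V → ℝ) (x : V) : ℝ :=
  (1 / m x) * ∑ y, (u y - u x) * w x y

/-- Weighted inner product of two functions over a finite set `S` of vertices:
`⟨u,v⟩_S = Σ_{x ∈ S} u(x) v(x) m_x`. -/
def iprodOn (m : V → ℝ) (S : Finset V) (u v : V → ℝ) : ℝ :=
  ∑ x ∈ S, u x * v x * m x

/-- Full weighted inner product `⟨u,v⟩ = Σ_{x ∈ V} u(x) v(x) m_x`. -/
def iprod (m : V → ℝ) (u v : V → ℝ) : ℝ := ∑ x, u x * v x * m x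

/-- `(G,m,w)` is a weighted graph: positive vertex measure, symmetric edge weight,
positive exactly on edges. -/
def IsWeight (G : SimpleGraph V) (m : V → ℝ) (w : V → V → ℝ) : Prop :=
  (∀ x, 0 < m x) ∧ (∀ x y, w x y = w y x) ∧
  (∀ x y, G.Adj x y → 0 < w x y) ∧ (∀ x y, ¬ G.Adj x y → w x y = 0)

/-- `B` is a vertex-boundary of `G`: no two boundary vertices are adjacent, and every
boundary vertex is adjacent to some interior vertex. -/
def IsBoundary (G : SimpleGraph V) (B : Finset V) : Prop :=
  (∀ x ∈ B, ∀ y ∈ B, ¬ G.Adj x y) ∧ (∀ x ∈ B, ∃ y, y ∉ B ∧ G.Adj x y)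

/-- `μ` is the nondecreasing sequence of eigenvalues (with multiplicity) of `-Δ`,
witnessed by an orthonormal (w.r.t. the measure `m`) basis of eigenfunctions. -/
def IsLapSpectrum (m : V → ℝ) (w : V → V → ℝ) (μ : Fin (Fintype.card V) → ℝ) : Prop :=
  Monotone μ ∧ ∃ v : Fin (Fintype.card V) → V → ℝ,
    (∀ i x, - lap m w (v i) x = μ i * v i x) ∧
    (∀ i j, iprod m (v i) (v j) = if i = j then 1 else 0)

/-- `σ` is the nondecreasing sequence of Steklov eigenvalues (with multiplicity) of
the Dirichlet-to-Neumann map of `(G,m,w,B)`: it is witnessed by a family of functions,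
harmonic in the interior, whose restrictions to `B` are orthonormal w.r.t. `⟨·,·⟩_B`
and whose normal derivatives `∂u/∂n = -Δu` on `B` satisfy the eigenvalue equations. -/
def IsSteklovSpectrum (m : V → ℝ) (w : V → V → ℝ) (B : Finset V)
    (σ : Fin B.card → ℝ) : Prop :=
  Monotone σ ∧ ∃ u : Fin B.card → V → ℝ,
    (∀ i y, y ∉ B → lap m w (u i) y = 0) ∧
    (∀ i x, x ∈ B → - lap m w (u i) x = σ i * u i x) ∧
    (∀ i j, iprodOn m B (u i) (u j) = if i = j then 1 else 0)

/-- `Mu2LB m w S c` says that the second smallest Laplacian eigenvalue `μ₂` of the induced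
weighted graph on `S` is `≥ c`, expressed via the variational characterization
`μ₂(S) = min { ⟨du,du⟩_S / ⟨u,u⟩_S : u ≠ 0, ⟨u,1⟩_S = 0 }`. -/
def Mu2LB (m : V → ℝ) (w : V → V → ℝ) (S : Finset V) (c : ℝ) : Prop :=
  ∀ u : V → ℝ, (∑ y ∈ S, u y * m y) = 0 →
    c * (∑ y ∈ S, u y ^ 2 * m y) ≤ (1 / 2) * ∑ x ∈ S, ∑ y ∈ S, (u y - u x) ^ 2 * w x y

/-- The carré du champ operator `Γ(f,g) = ½(Δ(fg) - fΔg - gΔf)`. -/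
noncomputable def gammaOp (m : V → ℝ) (w : V → V → ℝ) (f g : V → ℝ) (x : V) : ℝ :=
  (lap m w (f * g) x - f x * lap m w g x - g x * lap m w f x) / 2

/-- The iterated carré du champ operator `Γ₂(f,f) = ½ΔΓ(f,f) - Γ(f,Δf)`. -/
noncomputable def gamma2Op (m : V → ℝ) (w : V → V → ℝ) (f : V → ℝ) (x : V) : ℝ :=
  (lap m w (gammaOp m w f f) x) / 2 - gammaOp m w f (lap m w f) x

/-- Edge connectivity: the least number of edges whose deletion disconnects `G`. -/
noncomputable def edgeConn (G : SimpleGraph V) : ℕ :=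
  sInf {n | ∃ F : Finset (Sym2 V), ↑F ⊆ G.edgeSet ∧ F.card = n ∧
    ¬ (G.deleteEdges ↑F).Connected}

/-- Vertex connectivity: the least number of vertices whose deletion disconnects `G`
(with the convention `v(K_n) = n - 1`, realized by allowing deletions leaving at most
one vertex). -/
noncomputable def vertConn (G : SimpleGraph V) : ℕ :=
  sInf {n | ∃ S : Finset V, S.card = n ∧
    (¬ (G.induce (↑(Sᶜ : Finset V) : Set V)).Connected ∨ (Sᶜ : Finset V).card ≤ 1)}

/-- Edge weights of the weighted path on `Fin n` (vertices `0,…,n-1`), where all edges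
have weight `1` except the edge incident to the vertex `0`, which has weight `lam`. -/
def pathW (lam : ℝ) {n : ℕ} (a b : Fin n) : ℝ :=
  if a.val + 1 = b.val ∨ b.val + 1 = a.val then
    (if a.val = 0 ∨ b.val = 0 then lam else 1) else 0

/-- The Laplacian (with unit vertex measure) of the weighted path `pathW lam`. -/
noncomputable def pathLap (lam : ℝ) {n : ℕ} (u : Fin n → ℝ) (a : Fin n) : ℝ :=
  ∑ b, (u b - u a) * pathW lam a b

/-- The largest Laplacian eigenvalue of the path `P_i` on `i` vertices with unit weight. -/
noncomputable def pathTopEig (i : ℕ) : ℝ :=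
  sSup {r | ∃ u : Fin i → ℝ, u ≠ 0 ∧ ∀ a, - pathLap 1 u a = r * u a}

/-- `𝒫(k,λ)`: the first Dirichlet eigenvalue of the path with vertices `0,1,…,k`, unit
vertex measure, edge weights `w_{01} = λ` and `w_{j,j+1} = 1` for `j ≥ 1`, and boundary
vertex `0`: the smallest eigenvalue of `-Δ` on functions vanishing at `0`. -/
noncomputable def pathDirichlet (k : ℕ) (lam : ℝ) : ℝ :=
  sInf {r | ∃ u : Fin (k + 1) → ℝ, u ≠ 0 ∧ u 0 = 0 ∧
    ∀ a : Fin (k + 1), a.val ≠ 0 → - pathLap lam u a = r * u a}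


section AuxLichnerowicz

variable {V : Type*} [Fintype V]

/-- Bilinear Dirichlet energy form. -/
noncomputable def ebil (m : V → ℝ) (w : V → V → ℝ) (u v : V → ℝ) : ℝ :=
  (1 / 2) * ∑ x, ∑ y, (u y - u x) * (v y - v x) * w x y

lemma sum_antisymm (f : V → V → ℝ) (hf : ∀ x y, f y x = - f x y) :
    ∑ x, ∑ y, f x y = 0 := by
  have h1 : ∑ x, ∑ y, f x y = ∑ x, ∑ y, f y x := Finset.sum_comm
  have h2 : ∑ x, ∑ y, f y x = - ∑ x, ∑ y, f x y := by
    rw [← Finset.sum_neg_distrib]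
    refine Finset.sum_congr rfl fun x _ => ?_
    rw [← Finset.sum_neg_distrib]
    exact Finset.sum_congr rfl fun y _ => hf x y
  linarith [h1, h2]

lemma lap_mul_m {m : V → ℝ} (w : V → V → ℝ) (hm : ∀ x, 0 < m x) (v : V → ℝ) (x : V) :
    lap m w v x * m x = ∑ y, (v y - v x) * w x y := by
  rw [lap]
  field_simp
  exact mul_div_cancel_left₀ _ (hm x).ne'

lemma sum_lap_mul_m {m : V → ℝ} {w : V → V → ℝ} (hm : ∀ x, 0 < m x)
    (hw : ∀ x y, w x y = w y x) (v : V → ℝ) :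
    ∑ x, lap m w v x * m x = 0 := by
  rw [Finset.sum_congr rfl fun x _ => lap_mul_m w hm v x]
  exact sum_antisymm _ (fun x y => by rw [hw y x]; ring)

lemma iprod_neg_lap {m : V → ℝ} {w : V → V → ℝ} (hm : ∀ x, 0 < m x)
    (hw : ∀ x y, w x y = w y x) (v g : V → ℝ) :
    iprod m (fun x => - lap m w v x) g = ebil m w v g := by
  have h1 : iprod m (fun x => - lap m w v x) g
      = - ∑ x, ∑ y, (v y - v x) * g x * w x y := by
    rw [iprod, ← Finset.sum_neg_distrib]
    refine Finset.sum_congr rfl fun x _ => ?_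
    have : (- lap m w v x) * g x * m x = - ((lap m w v x * m x) * g x) := by ring
    rw [this, lap_mul_m w hm v x, Finset.sum_mul]
    exact neg_inj.mpr (Finset.sum_congr rfl fun y _ => by ring)
  have hsw : ∑ x, ∑ y, (v y - v x) * g y * w x y
      = - ∑ x, ∑ y, (v y - v x) * g x * w x y := by
    have hc : ∑ x, ∑ y, (v y - v x) * g y * w x y
        = ∑ x, ∑ y, (v x - v y) * g x * w y x := Finset.sum_comm
    rw [hc, ← Finset.sum_neg_distrib]
    refine Finset.sum_congr rfl fun x _ => ?_
    rw [← Finset.sum_neg_distrib]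
    refine Finset.sum_congr rfl fun y _ => by rw [hw y x]; ring
  have h2 : ebil m w v g = (1 / 2) * ((∑ x, ∑ y, (v y - v x) * g y * w x y)
      - ∑ x, ∑ y, (v y - v x) * g x * w x y) := by
    rw [ebil, ← Finset.sum_sub_distrib]
    congr 1
    refine Finset.sum_congr rfl fun x _ => ?_
    rw [← Finset.sum_sub_distrib]
    exact Finset.sum_congr rfl fun y _ => by ring
  rw [h1, h2, hsw]
  ring

lemma ebil_self_nonneg {m : V → ℝ} {w : V → V → ℝ} (hw0 : ∀ x y, 0 ≤ w x y) (v : V → ℝ) :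
    0 ≤ ebil m w v v := by
  rw [ebil]
  have : 0 ≤ ∑ x, ∑ y, (v y - v x) * (v y - v x) * w x y :=
    Finset.sum_nonneg fun x _ => Finset.sum_nonneg fun y _ =>
      mul_nonneg (mul_self_nonneg _) (hw0 x y)
  linarith

lemma iprod_self_nonneg {m : V → ℝ} (hm : ∀ x, 0 < m x) (v : V → ℝ) :
    0 ≤ iprod m v v :=
  Finset.sum_nonneg fun x _ => mul_nonneg (mul_self_nonneg _) (hm x).le

lemma iprod_self_eq_zero {m : V → ℝ} (hm : ∀ x, 0 < m x) {v : V → ℝ}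
    (h : iprod m v v = 0) : ∀ x, v x = 0 := by
  intro x
  have hterm : ∀ y ∈ Finset.univ, (0:ℝ) ≤ v y * v y * m y :=
    fun y _ => mul_nonneg (mul_self_nonneg _) (hm y).le
  have h0 := (Finset.sum_eq_zero_iff_of_nonneg hterm).mp h x (Finset.mem_univ x)
  have hmx := (hm x).ne'
  have hvv : v x * v x = 0 := by
    rcases mul_eq_zero.mp h0 with h' | h'
    · exact h'
    · exact absurd h' hmx
  exact mul_self_eq_zero.mp hvv

lemma iprod_smul_self {m : V → ℝ} (c : ℝ) (v : V → ℝ) :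
    iprod m (fun z => c * v z) (fun z => c * v z) = c ^ 2 * iprod m v v := by
  rw [iprod, iprod, Finset.mul_sum]
  exact Finset.sum_congr rfl fun x _ => by ring

lemma iprod_smul_left {m : V → ℝ} (c : ℝ) (v g : V → ℝ) :
    iprod m (fun z => c * v z) g = c * iprod m v g := by
  rw [iprod, iprod, Finset.mul_sum]
  exact Finset.sum_congr rfl fun x _ => by ring

lemma double_sum_smul (c : ℝ) (f : V → V → ℝ) :
    ∑ x, ∑ y, c * f x y = c * ∑ x, ∑ y, f x y := by
  rw [Finset.mul_sum]
  exact Finset.sum_congr rfl fun x _ => (Finset.mul_sum _ _ _).symm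

lemma ebil_smul_self {m : V → ℝ} {w : V → V → ℝ} (c : ℝ) (v : V → ℝ) :
    ebil m w (fun z => c * v z) (fun z => c * v z) = c ^ 2 * ebil m w v v := by
  rw [ebil, ebil]
  rw [show ∑ x, ∑ y, ((fun z => c * v z) y - (fun z => c * v z) x) * ((fun z => c * v z) y - (fun z => c * v z) x) * w x y
      = ∑ x, ∑ y, c ^ 2 * ((v y - v x) * (v y - v x) * w x y) from
    Finset.sum_congr rfl fun x _ => Finset.sum_congr rfl fun y _ => by ring]
  rw [double_sum_smul]
  ring

lemma ebil_expand {m : V → ℝ} {w : V → V → ℝ} (φ ψ : V → ℝ) (t : ℝ) :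
    ebil m w (fun z => φ z + t * ψ z) (fun z => φ z + t * ψ z)
      = ebil m w φ φ + 2 * t * ebil m w φ ψ + t ^ 2 * ebil m w ψ ψ := by
  rw [ebil, ebil, ebil, ebil]
  have key : ∑ x, ∑ y, ((φ y + t * ψ y) - (φ x + t * ψ x)) * ((φ y + t * ψ y) - (φ x + t * ψ x)) * w x y
      = ∑ x, ∑ y, ((φ y - φ x) * (φ y - φ x) * w x y
        + ((2 * t) * ((φ y - φ x) * (ψ y - ψ x) * w x y)
          + t ^ 2 * ((ψ y - ψ x) * (ψ y - ψ x) * w x y))) := by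
    refine Finset.sum_congr rfl fun x _ => Finset.sum_congr rfl fun y _ => by ring
  rw [key]
  rw [Finset.sum_congr rfl fun x (_ : x ∈ Finset.univ) => Finset.sum_add_distrib]
  rw [Finset.sum_add_distrib]
  rw [Finset.sum_congr rfl fun x (_ : x ∈ Finset.univ) => Finset.sum_add_distrib]
  rw [Finset.sum_add_distrib]
  rw [double_sum_smul (2 * t), double_sum_smul (t ^ 2)]
  ring

lemma iprod_expand {m : V → ℝ} (φ ψ : V → ℝ) (t : ℝ) :
    iprod m (fun z => φ z + t * ψ z) (fun z => φ z + t * ψ z)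
      = iprod m φ φ + 2 * t * iprod m φ ψ + t ^ 2 * iprod m ψ ψ := by
  rw [iprod, iprod, iprod, iprod, Finset.mul_sum, Finset.mul_sum, ← Finset.sum_add_distrib,
    ← Finset.sum_add_distrib]
  exact Finset.sum_congr rfl fun x _ => by ring

lemma iprod_add_left {m : V → ℝ} (φ ψ g : V → ℝ) (t : ℝ) :
    iprod m (fun z => φ z + t * ψ z) g = iprod m φ g + t * iprod m ψ g := by
  rw [iprod, iprod, iprod, Finset.mul_sum, ← Finset.sum_add_distrib]
  exact Finset.sum_congr rfl fun x _ => by ring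

lemma iprod_sub_left {m : V → ℝ} (φ ψ g : V → ℝ) :
    iprod m (fun z => φ z - ψ z) g = iprod m φ g - iprod m ψ g := by
  rw [iprod, iprod, iprod, ← Finset.sum_sub_distrib]
  exact Finset.sum_congr rfl fun x _ => by ring

lemma walk_const {G : SimpleGraph V} {φ : V → ℝ}
    (hadj : ∀ a b, G.Adj a b → φ a = φ b) {a b : V} (p : G.Walk a b) : φ a = φ b := by
  induction p with
  | nil => rfl
  | cons h _ ih => exact (hadj _ _ h).trans ih

lemma ebil_self_eq_zero_const {G : SimpleGraph V} (hG : G.Connected)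
    {m : V → ℝ} {w : V → V → ℝ} (hwpos : ∀ x y, G.Adj x y → 0 < w x y)
    (hw0 : ∀ x y, 0 ≤ w x y) {v : V → ℝ}
    (h : ebil m w v v = 0) : ∀ a b, v a = v b := by
  have hsum : ∑ x, ∑ y, (v y - v x) * (v y - v x) * w x y = 0 := by
    rw [ebil] at h; linarith
  have hnn : ∀ x ∈ Finset.univ, (0:ℝ) ≤ ∑ y, (v y - v x) * (v y - v x) * w x y :=
    fun x _ => Finset.sum_nonneg fun y _ => mul_nonneg (mul_self_nonneg _) (hw0 x y)
  have hinner : ∀ x ∈ Finset.univ, ∑ y, (v y - v x) * (v y - v x) * w x y = 0 :=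
    (Finset.sum_eq_zero_iff_of_nonneg hnn).mp hsum
  have hadj : ∀ a b, G.Adj a b → v a = v b := by
    intro a b hab
    have hnn2 : ∀ y ∈ Finset.univ, (0:ℝ) ≤ (v y - v a) * (v y - v a) * w a y :=
      fun y _ => mul_nonneg (mul_self_nonneg _) (hw0 a y)
    have h0 := (Finset.sum_eq_zero_iff_of_nonneg hnn2).mp (hinner a (Finset.mem_univ a))
      b (Finset.mem_univ b)
    have hwab := (hwpos a b hab).ne'
    have hsq : (v b - v a) * (v b - v a) = 0 := by
      rcases mul_eq_zero.mp h0 with h' | h'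
      · exact h'
      · exact absurd h' hwab
    have := mul_self_eq_zero.mp hsq
    linarith [sub_eq_zero.mp this]
  intro a b
  exact walk_const hadj (hG.preconnected a b).some

/-- Existence of a nonconstant Laplacian eigenfunction whose eigenvalue is at most the
Rayleigh quotient of any given mean-zero function of norm at least one. -/
lemma exists_min_eigen {m : V → ℝ} {w : V → V → ℝ}
    (hm : ∀ x, 0 < m x) (hw : ∀ x y, w x y = w y x) (hw0 : ∀ x y, 0 ≤ w x y)
    {v0 : V → ℝ} (hv0perp : iprod m v0 (fun _ => 1) = 0) (hv0n : 1 ≤ iprod m v0 v0) :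
    ∃ (lam : ℝ) (φ : V → ℝ), 0 ≤ lam ∧ (∀ x, - lap m w φ x = lam * φ x) ∧
      (∃ a b, φ a ≠ φ b) ∧ lam ≤ ebil m w v0 v0 := by
  classical
  -- the constraint set
  set S : Set (V → ℝ) := {v | iprod m v v = 1 ∧ iprod m v (fun _ => 1) = 0} with hS
  -- continuity facts
  have hconts : Continuous (fun v : V → ℝ => iprod m v v) := by
    unfold iprod
    exact continuous_finset_sum _ fun x _ =>
      ((continuous_apply x).mul (continuous_apply x)).mul continuous_const
  have hcont1 : Continuous (fun v : V → ℝ => iprod m v (fun _ => 1)) := by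
    unfold iprod
    exact continuous_finset_sum _ fun x _ =>
      ((continuous_apply x).mul continuous_const).mul continuous_const
  have hcontE : Continuous (fun v : V → ℝ => ebil m w v v) := by
    unfold ebil
    refine continuous_const.mul (continuous_finset_sum _ fun x _ =>
      continuous_finset_sum _ fun y _ => ?_)
    exact (((continuous_apply y).sub (continuous_apply x)).mul
      ((continuous_apply y).sub (continuous_apply x))).mul continuous_const
  -- S is compact
  have hSclosed : IsClosed S := by
    refine IsClosed.inter ?_ ?_
    · exact isClosed_eq hconts continuous_const
    · exact isClosed_eq hcont1 continuous_const
  have hSsub : S ⊆ Set.pi Set.univ (fun x : V => Set.Icc (- Real.sqrt (1 / m x)) (Real.sqrt (1 / m x))) := by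
    intro v hv x _
    have hv1 : iprod m v v = 1 := hv.1
    have hterm : v x * v x * m x ≤ 1 := by
      rw [← hv1, iprod]
      exact Finset.single_le_sum (f := fun y => v y * v y * m y)
        (fun y _ => mul_nonneg (mul_self_nonneg _) (hm y).le) (Finset.mem_univ x)
    have hsq : v x ^ 2 ≤ 1 / m x := by
      rw [le_div_iff₀ (hm x)]
      nlinarith [hterm]
    have habs : |v x| ≤ Real.sqrt (1 / m x) := by
      rw [← Real.sqrt_sq_eq_abs]
      exact Real.sqrt_le_sqrt hsq
    exact abs_le.mp habs
  have hScomp : IsCompact S := by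
    refine IsCompact.of_isClosed_subset ?_ hSclosed hSsub
    exact isCompact_univ_pi fun x => isCompact_Icc
  -- S is nonempty
  have hv0pos : (0:ℝ) < iprod m v0 v0 := lt_of_lt_of_le one_pos hv0n
  have hSne : S.Nonempty := by
    refine ⟨fun z => (1 / Real.sqrt (iprod m v0 v0)) * v0 z, ?_, ?_⟩
    · rw [iprod_smul_self]
      rw [div_pow, one_pow, Real.sq_sqrt hv0pos.le]
      field_simp
    · rw [iprod_smul_left, hv0perp, mul_zero]
  obtain ⟨φ, hφS, hφmin⟩ := hScomp.exists_isMinOn hSne hcontE.continuousOn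
  have hφ1 : iprod m φ φ = 1 := hφS.1
  have hφperp : iprod m φ (fun _ => 1) = 0 := hφS.2
  set lam := ebil m w φ φ with hlam
  have hlam0 : 0 ≤ lam := ebil_self_nonneg hw0 φ
  -- master inequality
  have master : ∀ v : V → ℝ, iprod m v (fun _ => 1) = 0 →
      lam * iprod m v v ≤ ebil m w v v := by
    intro v hvperp
    rcases eq_or_lt_of_le (iprod_self_nonneg hm v) with h0 | hpos
    · have hz := iprod_self_eq_zero hm h0.symm
      have : ebil m w v v = 0 := by
        rw [ebil]
        rw [Finset.sum_eq_zero fun x _ => Finset.sum_eq_zero fun y _ => by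
          rw [hz x, hz y]; ring]
        ring
      rw [this, ← h0, mul_zero]
    · set c := Real.sqrt (iprod m v v) with hc
      have hcpos : 0 < c := Real.sqrt_pos.mpr hpos
      have hc2 : c ^ 2 = iprod m v v := Real.sq_sqrt hpos.le
      have hmem : (fun z => (1 / c) * v z) ∈ S := by
        constructor
        · rw [iprod_smul_self, div_pow, one_pow, hc2]
          field_simp
        · rw [iprod_smul_left, hvperp, mul_zero]
      have hle : ebil m w φ φ ≤ ebil m w (fun z => (1 / c) * v z) (fun z => (1 / c) * v z) :=
        hφmin hmem
      have hEs : ebil m w (fun z => (1 / c) * v z) (fun z => (1 / c) * v z)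
          = (1 / c ^ 2) * ebil m w v v := by rw [ebil_smul_self]; ring
      rw [hEs] at hle
      have this := hle
      have hc2pos : (0:ℝ) < c ^ 2 := by positivity
      calc lam * iprod m v v = (c ^ 2) * lam := by rw [hc2]; ring
        _ ≤ (c ^ 2) * ((1 / c ^ 2) * ebil m w v v) := by
            exact mul_le_mul_of_nonneg_left this hc2pos.le
        _ = ebil m w v v := by field_simp
  -- Euler-Lagrange
  have EL : ∀ ψ : V → ℝ, iprod m ψ (fun _ => 1) = 0 →
      ebil m w φ ψ = lam * iprod m φ ψ := by
    intro ψ hψperp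
    set b := ebil m w φ ψ - lam * iprod m φ ψ with hb
    set a := ebil m w ψ ψ - lam * iprod m ψ ψ with ha
    have key : ∀ t : ℝ, 0 ≤ 2 * t * b + t ^ 2 * a := by
      intro t
      have hperp : iprod m (fun z => φ z + t * ψ z) (fun _ => 1) = 0 := by
        rw [iprod_add_left, hφperp, hψperp]; ring
      have := master _ hperp
      rw [ebil_expand, iprod_expand, hφ1] at this
      rw [hb, ha]
      nlinarith [this]
    have hbz : b = 0 := by
      by_contra hbne
      have hb2 : 0 < b ^ 2 := by positivity
      set s := 1 / (|a| + 1) with hs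
      have hapos : (0:ℝ) < |a| + 1 := by positivity
      have hspos : 0 < s := by positivity
      have h1 := key (-(s * b))
      have h2 : 0 ≤ s * b ^ 2 * (s * a - 2) := by nlinarith [h1]
      have h3 : 0 ≤ s * a - 2 := by
        by_contra hneg
        push_neg at hneg
        nlinarith [mul_pos hspos hb2]
      have h4 : s * a ≤ s * |a| := mul_le_mul_of_nonneg_left (le_abs_self a) hspos.le
      have h5 : s * (|a| + 1) = 1 := by rw [hs]; field_simp
      nlinarith [abs_nonneg a]
    linarith [hbz]
  -- pointwise eigenvalue equation
  set ξ : V → ℝ := fun x => - lap m w φ x - lam * φ x with hξ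
  have hξperp : iprod m ξ (fun _ => 1) = 0 := by
    have h1 : iprod m ξ (fun _ => 1)
        = iprod m (fun x => - lap m w φ x) (fun _ => 1) - lam * iprod m φ (fun _ => 1) := by
      rw [show iprod m ξ (fun _ => 1) = iprod m (fun x => - lap m w φ x) (fun _ => 1)
          - iprod m (fun x => lam * φ x) (fun _ => 1) from iprod_sub_left _ _ _]
      rw [iprod_smul_left]
    have h2 : iprod m (fun x => - lap m w φ x) (fun _ => 1) = 0 := by
      rw [iprod]
      rw [show ∑ x, (- lap m w φ x) * 1 * m x = - ∑ x, lap m w φ x * m x from by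
        rw [← Finset.sum_neg_distrib]; exact Finset.sum_congr rfl fun x _ => by ring]
      rw [sum_lap_mul_m hm hw φ, neg_zero]
    rw [h1, h2, hφperp]; ring
  have hξzero : ∀ x, ξ x = 0 := by
    apply iprod_self_eq_zero hm
    have h1 : iprod m ξ ξ = iprod m (fun x => - lap m w φ x) ξ - lam * iprod m φ ξ := by
      rw [show iprod m ξ ξ = iprod m (fun x => - lap m w φ x) ξ
          - iprod m (fun x => lam * φ x) ξ from iprod_sub_left _ _ _]
      rw [iprod_smul_left]
    rw [h1, iprod_neg_lap hm hw, EL ξ hξperp]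
    ring
  have heigen : ∀ x, - lap m w φ x = lam * φ x := by
    intro x
    have := hξzero x
    simp only [hξ] at this
    linarith [this]
  -- φ is nonconstant
  have huniv : (Finset.univ : Finset V).Nonempty := by
    by_contra h
    rw [Finset.not_nonempty_iff_eq_empty] at h
    rw [iprod, h, Finset.sum_empty] at hφ1
    norm_num at hφ1
  have hnc : ∃ a b, φ a ≠ φ b := by
    by_contra h
    push_neg at h
    have hmpos : 0 < ∑ x, m x := Finset.sum_pos (fun x _ => hm x) huniv
    obtain ⟨x₀, _⟩ := huniv
    have hconst : ∀ z, φ z = φ x₀ := fun z => h z x₀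
    have h1 : iprod m φ (fun _ => 1) = φ x₀ * ∑ x, m x := by
      rw [iprod, Finset.mul_sum]
      exact Finset.sum_congr rfl fun x _ => by rw [hconst x]; ring
    have hx0 : φ x₀ = 0 := by
      rw [hφperp] at h1
      rcases mul_eq_zero.mp h1.symm with h' | h'
      · exact h'
      · exact absurd h' hmpos.ne'
    have h2 : iprod m φ φ = 0 := by
      rw [iprod]
      exact Finset.sum_eq_zero fun x _ => by rw [hconst x, hx0]; ring
    rw [h2] at hφ1
    norm_num at hφ1
  -- lam is at most the Rayleigh quotient of v0
  have hlamle : lam ≤ ebil m w v0 v0 := by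
    have := master v0 hv0perp
    nlinarith [this, hlam0, hv0n]
  exact ⟨lam, φ, hlam0, heigen, hnc, hlamle⟩


end AuxLichnerowicz

/-- Lichnerowicz estimate for the Steklov eigenvalue with respect to
Ollivier curvature: if the Ollivier curvature (in the Münch–Wojciechowski formulation)
of a connected weighted finite graph with boundary `(G,m,w,B)` is bounded below by
`κ > 0`, then `σ₂ ≥ κ`. -/
theorem lichnerowicz_ollivier_steklov
    {V : Type*} [Fintype V] [DecidableEq V]
    (G : SimpleGraph V) (m : V → ℝ) (w : V → V → ℝ) (B : Finset V)
    (hG : G.Connected) (hW : IsWeight G m w) (hB : IsBoundary G B)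
    (κ : ℝ) (hκ : 0 < κ)
    (hcurv : ∀ x y : V, x ≠ y → ∀ f : V → ℝ,
      (∀ u v : V, |f u - f v| ≤ (G.dist u v : ℝ)) →
      (f y - f x) / (G.dist y x : ℝ) = 1 →
      κ ≤ (lap m w f x - lap m w f y) / (G.dist x y : ℝ))
    (σ : Fin B.card → ℝ) (hσ : IsSteklovSpectrum m w B σ)
    (hB2 : 1 < B.card) :
    κ ≤ σ ⟨1, hB2⟩ := by
  classical
  obtain ⟨hm, hsymm, hwpos, hwzero⟩ := hW
  have hw0 : ∀ x y, 0 ≤ w x y := by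
    intro x y
    by_cases h : G.Adj x y
    · exact (hwpos x y h).le
    · exact le_of_eq (hwzero x y h).symm
  obtain ⟨hmono, U, hharm, heig, horth⟩ := hσ
  set i0 : Fin B.card := ⟨0, by omega⟩ with hi0
  set i1 : Fin B.card := ⟨1, hB2⟩ with hi1
  set u : V → ℝ := U i1 with hu
  -- energy of each eigenfunction equals its eigenvalue
  have hEi : ∀ i, ebil m w (U i) (U i) = σ i := by
    intro i
    have h1 := iprod_neg_lap hm hsymm (U i) (U i)
    rw [← h1, iprod, ← Finset.sum_add_sum_compl B]
    have hc : ∑ x ∈ Bᶜ, (- lap m w (U i) x) * U i x * m x = 0 :=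
      Finset.sum_eq_zero fun x hx => by
        rw [hharm i x (Finset.mem_compl.mp hx)]; ring
    rw [hc, add_zero]
    have h2 : ∀ x ∈ B, (- lap m w (U i) x) * U i x * m x = σ i * (U i x * U i x * m x) :=
      fun x hx => by rw [heig i x hx]; ring
    rw [Finset.sum_congr rfl h2, ← Finset.mul_sum]
    have h3 := horth i i
    rw [if_pos rfl] at h3
    rw [iprodOn] at h3
    rw [h3, mul_one]
  obtain ⟨b₀, hb₀⟩ := Finset.card_pos.mp (show 0 < B.card by omega)
  have hSB : 0 < ∑ x ∈ B, m x := Finset.sum_pos (fun x _ => hm x) ⟨b₀, hb₀⟩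
  have hσ1nonneg : 0 ≤ σ i1 := (hEi i1) ▸ ebil_self_nonneg hw0 (U i1)
  -- the second Steklov eigenvalue is nonzero
  have hσ1ne : σ i1 ≠ 0 := by
    intro h0
    have hσ0le : σ i0 ≤ σ i1 := hmono (by rw [hi0, hi1]; exact Fin.mk_le_mk.mpr (by norm_num))
    have hσ0 : σ i0 = 0 :=
      le_antisymm (h0 ▸ hσ0le) ((hEi i0) ▸ ebil_self_nonneg hw0 (U i0))
    have hc1 : ∀ a b, U i1 a = U i1 b :=
      ebil_self_eq_zero_const hG hwpos hw0 (by rw [hEi i1, h0])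
    have hc0 : ∀ a b, U i0 a = U i0 b :=
      ebil_self_eq_zero_const hG hwpos hw0 (by rw [hEi i0, hσ0])
    have hcomp : ∀ (j k : Fin B.card), (∀ a b, U j a = U j b) → (∀ a b, U k a = U k b) →
        iprodOn m B (U j) (U k) = U j b₀ * U k b₀ * ∑ x ∈ B, m x := by
      intro j k hcj hck
      rw [iprodOn, Finset.mul_sum]
      exact Finset.sum_congr rfl fun x _ => by rw [hcj x b₀, hck x b₀]
    have h00 : U i0 b₀ * U i0 b₀ * ∑ x ∈ B, m x = 1 := by
      rw [← hcomp i0 i0 hc0 hc0]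
      simpa using horth i0 i0
    have h11 : U i1 b₀ * U i1 b₀ * ∑ x ∈ B, m x = 1 := by
      rw [← hcomp i1 i1 hc1 hc1]
      simpa using horth i1 i1
    have hne01 : i0 ≠ i1 := by
      rw [hi0, hi1]
      exact Fin.ne_of_val_ne (by norm_num)
    have h01 : U i0 b₀ * U i1 b₀ * ∑ x ∈ B, m x = 0 := by
      rw [← hcomp i0 i1 hc0 hc1]
      have := horth i0 i1
      rwa [if_neg hne01] at this
    have hsq : (U i0 b₀ * U i1 b₀ * ∑ x ∈ B, m x) ^ 2
        = (U i0 b₀ * U i0 b₀ * ∑ x ∈ B, m x) * (U i1 b₀ * U i1 b₀ * ∑ x ∈ B, m x) := by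
      ring
    rw [h01, h00, h11] at hsq
    norm_num at hsq
  -- mean-zero property of u on B
  have hBsum : ∑ x ∈ B, u x * m x = 0 := by
    have h1 : ∑ x, (- lap m w u x) * m x = 0 := by
      rw [show ∑ x, (- lap m w u x) * m x = - ∑ x, lap m w u x * m x from by
        rw [← Finset.sum_neg_distrib]
        exact Finset.sum_congr rfl fun x _ => by ring]
      rw [sum_lap_mul_m hm hsymm u, neg_zero]
    rw [← Finset.sum_add_sum_compl B] at h1
    have hc : ∑ x ∈ Bᶜ, (- lap m w u x) * m x = 0 :=
      Finset.sum_eq_zero fun x hx => by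
        rw [hu, hharm i1 x (Finset.mem_compl.mp hx)]; ring
    rw [hc, add_zero] at h1
    have h2 : ∑ x ∈ B, (- lap m w u x) * m x = σ i1 * ∑ x ∈ B, u x * m x := by
      rw [Finset.mul_sum]
      exact Finset.sum_congr rfl fun x hx => by rw [hu, heig i1 x hx]; ring
    rw [h2] at h1
    exact (mul_eq_zero.mp h1).resolve_left hσ1ne
  -- recentered eigenfunction
  have hMpos : 0 < ∑ x, m x := Finset.sum_pos (fun x _ => hm x) ⟨b₀, Finset.mem_univ b₀⟩
  set cbar : ℝ := (∑ x, u x * m x) / (∑ x, m x) with hcbar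
  set ut : V → ℝ := fun z => u z - cbar with hut
  have hperp : iprod m ut (fun _ => 1) = 0 := by
    rw [iprod]
    rw [Finset.sum_congr rfl fun x (_ : x ∈ Finset.univ) =>
      show ut x * 1 * m x = u x * m x - cbar * m x from by rw [hut]; ring]
    rw [Finset.sum_sub_distrib, ← Finset.mul_sum, hcbar]
    field_simp
    ring
  have hEut : ebil m w ut ut = σ i1 := by
    rw [← hEi i1, ebil, ebil]
    refine congrArg _ (Finset.sum_congr rfl fun x _ => Finset.sum_congr rfl fun y _ => ?_)
    rw [hut, hu]
    ring
  have hutn : 1 ≤ iprod m ut ut := by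
    have hBval : ∑ x ∈ B, ut x * ut x * m x
        = 1 - 2 * cbar * (∑ x ∈ B, u x * m x) + cbar * cbar * ∑ x ∈ B, m x := by
      rw [Finset.sum_congr rfl fun x (_ : x ∈ B) =>
        show ut x * ut x * m x
          = u x * u x * m x - 2 * cbar * (u x * m x) + cbar * cbar * m x from by
          rw [hut]; ring]
      rw [Finset.sum_add_distrib, Finset.sum_sub_distrib, ← Finset.mul_sum, ← Finset.mul_sum]
      have hn := horth i1 i1
      rw [if_pos rfl] at hn
      rw [iprodOn] at hn
      rw [hu, hn]
    have hBle : ∑ x ∈ B, ut x * ut x * m x ≤ iprod m ut ut := by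
      rw [iprod]
      exact Finset.sum_le_sum_of_subset_of_nonneg (Finset.subset_univ B)
        fun x _ _ => mul_nonneg (mul_self_nonneg _) (hm x).le
    rw [hBval, hBsum] at hBle
    nlinarith [hBle, mul_self_nonneg cbar, hSB]
  -- the Laplacian eigenfunction
  obtain ⟨lam, φ, hlam0, heigenφ, hnc, hlamle⟩ :=
    exists_min_eigen hm hsymm hw0 hperp hutn
  rw [hEut] at hlamle
  -- adjacent pair with strict increase
  have hadjlt : ∃ a b, G.Adj a b ∧ φ a < φ b := by
    have hADJ : ¬ (∀ a b, G.Adj a b → φ a = φ b) := by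
      intro h
      obtain ⟨a, b, hab⟩ := hnc
      exact hab (walk_const h (hG.preconnected a b).some)
    push_neg at hADJ
    obtain ⟨a, b, hab, hne⟩ := hADJ
    rcases lt_or_gt_of_ne hne with h | h
    · exact ⟨a, b, hab, h⟩
    · exact ⟨b, a, hab.symm, h⟩
  obtain ⟨a, b, hab, hlt⟩ := hadjlt
  have hdpos : ∀ {p q : V}, p ≠ q → (0:ℝ) < (G.dist p q : ℝ) := by
    intro p q h
    exact_mod_cast hG.pos_dist_of_ne h
  set ratio : V × V → ℝ := fun p => (φ p.2 - φ p.1) / (G.dist p.1 p.2 : ℝ) with hratio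
  set P : Finset (V × V) := Finset.univ.filter (fun p : V × V => p.1 ≠ p.2) with hP
  have habP : (a, b) ∈ P := by
    rw [hP, Finset.mem_filter]
    exact ⟨Finset.mem_univ _, hab.ne⟩
  obtain ⟨p0, hp0P, hp0max⟩ := Finset.exists_max_image P ratio ⟨_, habP⟩
  have hxyne : p0.1 ≠ p0.2 := (Finset.mem_filter.mp hp0P).2
  set L : ℝ := ratio p0 with hL
  have hLpos : 0 < L := by
    have h1 : 0 < ratio (a, b) := by
      rw [hratio]
      exact div_pos (sub_pos.mpr hlt) (hdpos hab.ne)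
    exact lt_of_lt_of_le h1 (hp0max (a, b) habP)
  have hub : ∀ p q : V, p ≠ q → φ q - φ p ≤ L * (G.dist p q : ℝ) := by
    intro p q hpq
    have h1 : ratio (p, q) ≤ L :=
      hp0max (p, q) (by rw [hP, Finset.mem_filter]; exact ⟨Finset.mem_univ _, hpq⟩)
    have h2 := hdpos hpq
    rw [hratio] at h1
    calc φ q - φ p = ((φ q - φ p) / (G.dist p q : ℝ)) * (G.dist p q : ℝ) := by
          field_simp
      _ ≤ L * (G.dist p q : ℝ) := mul_le_mul_of_nonneg_right h1 h2.le
  have hAbs : ∀ p q : V, p ≠ q → |φ p - φ q| ≤ L * (G.dist p q : ℝ) := by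
    intro p q hpq
    have hdc : ((G.dist q p : ℕ) : ℝ) = ((G.dist p q : ℕ) : ℝ) := by
      rw [SimpleGraph.dist_comm]
    rw [abs_le]
    constructor
    · have h1 := hub p q hpq
      linarith
    · have h2 := hub q p hpq.symm
      rw [hdc] at h2
      linarith
  set f : V → ℝ := fun z => φ z / L with hf
  have hLip : ∀ p q : V, |f p - f q| ≤ (G.dist p q : ℝ) := by
    intro p q
    rcases eq_or_ne p q with rfl | hpq
    · simp [SimpleGraph.dist_self]
    · have hd := hdpos hpq
      rw [hf]
      rw [div_sub_div_same, abs_div, abs_of_pos hLpos, div_le_iff₀ hLpos]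
      calc |φ p - φ q| ≤ L * (G.dist p q : ℝ) := hAbs p q hpq
        _ = (G.dist p q : ℝ) * L := by ring
  have hval : φ p0.2 - φ p0.1 = L * (G.dist p0.1 p0.2 : ℝ) := by
    rw [hL, hratio]
    have := (hdpos hxyne).ne'
    field_simp
  have htight : (f p0.2 - f p0.1) / (G.dist p0.2 p0.1 : ℝ) = 1 := by
    have hdc : ((G.dist p0.2 p0.1 : ℕ) : ℝ) = ((G.dist p0.1 p0.2 : ℕ) : ℝ) := by
      rw [SimpleGraph.dist_comm]
    rw [hf, div_sub_div_same, hval, hdc]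
    have hd := (hdpos hxyne).ne'
    field_simp
  have hmain := hcurv p0.1 p0.2 hxyne f hLip htight
  have hlapf : ∀ x, lap m w f x = lap m w φ x / L := by
    intro x
    rw [hf]
    rw [lap, lap]
    rw [Finset.sum_congr rfl fun y (_ : y ∈ Finset.univ) =>
      show (φ y / L - φ x / L) * w x y = ((φ y - φ x) * w x y) / L from by
        rw [div_sub_div_same, div_mul_eq_mul_div]]
    rw [← Finset.sum_div]
    ring
  have heval : (lap m w f p0.1 - lap m w f p0.2) / (G.dist p0.1 p0.2 : ℝ) = lam := by
    rw [hlapf, hlapf]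
    have e1 : lap m w φ p0.1 = -(lam * φ p0.1) := by
      have := heigenφ p0.1; linarith
    have e2 : lap m w φ p0.2 = -(lam * φ p0.2) := by
      have := heigenφ p0.2; linarith
    rw [e1, e2]
    rw [show (-(lam * φ p0.1) / L - -(lam * φ p0.2) / L)
        = lam * (φ p0.2 - φ p0.1) / L from by ring]
    rw [hval]
    have hd := (hdpos hxyne).ne'
    field_simp
  rw [heval] at hmain
  calc κ ≤ lam := hmain
    _ ≤ σ i1 := hlamle
    _ = σ ⟨1, hB2⟩ := by rw [hi1]


end GraphSteklov
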